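/- arXiv:1606.00738 — 3 statements merged into one kernel-verified Lean document; each statement's English description precedes it below -/
import Mathlib

section
/- For all integers 0 ≤ k ≤ N, the Kolmogorov width of the unit ball of ℓ₁^N in ℓ₂^N satisfies d_k(B₁^N, ℓ₂^N) = sqrt(1 - k/N). -/
set_option maxHeartbeats 1000000

open Finset

section KolWidthAux
open Complex Real

noncomputable def freqS (k : ℕ) : Finset ℤ :=
  if Even k then (Finset.Icc (-(k/2 : ℤ)) (k/2)).erase 0 else Finset.Icc (-(k/2 : ℤ)) (k/2)

lemma freqS_card (k : ℕ) : (freqS k).card = k := by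
  unfold freqS
  have h : (Finset.Icc (-(k/2 : ℤ)) (k/2)).card = 2*(k/2)+1 := by
    rw [Int.card_Icc]; omega
  split_ifs with he
  · have h2 := Nat.even_iff.mp he
    rw [Finset.card_erase_of_mem (by simp [Finset.mem_Icc]; positivity), h]
    omega
  · have h2 := Nat.odd_iff.mp (Nat.not_even_iff_odd.mp he)
    rw [h]; omega

lemma freqS_neg {k : ℕ} {f : ℤ} (hf : f ∈ freqS k) : -f ∈ freqS k := by
  unfold freqS at *
  split_ifs at * with he <;> simp [Finset.mem_Icc, Finset.mem_erase] at * <;> omega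

lemma freqS_bound {k : ℕ} {f : ℤ} (hf : f ∈ freqS k) : -(k/2 : ℤ) ≤ f ∧ f ≤ k/2 := by
  unfold freqS at hf
  split_ifs at hf <;> simp [Finset.mem_Icc, Finset.mem_erase] at hf <;> omega

lemma sum_exp_ne (N : ℕ) (hN : 0 < N) (d : ℤ) (hd : ¬ (N:ℤ) ∣ d) :
    ∑ j : Fin N, Complex.exp ((2*π*(d*j)/N : ℝ) * Complex.I) = 0 := by
  have hN' : (N:ℝ) ≠ 0 := Nat.cast_ne_zero.mpr hN.ne'
  have hNc : (N:ℂ) ≠ 0 := Nat.cast_ne_zero.mpr hN.ne'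
  set z := Complex.exp ((2*π*d/N : ℝ) * Complex.I) with hz
  have hpow : ∀ j : ℕ, Complex.exp ((2*π*(d*j)/N : ℝ) * Complex.I) = z ^ j := by
    intro j
    rw [hz, ← Complex.exp_nat_mul]
    congr 1
    push_cast
    ring
  have hzN : z ^ N = 1 := by
    rw [hz, ← Complex.exp_nat_mul]
    have : (N:ℂ) * (((2*π*d/N : ℝ)) * Complex.I) = (d:ℂ) * (2 * π * Complex.I) := by
      push_cast
      field_simp
    rw [this, Complex.exp_int_mul_two_pi_mul_I]
  have hz1 : z ≠ 1 := by
    intro h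
    rw [hz, Complex.exp_eq_one_iff] at h
    obtain ⟨n, hn⟩ := h
    have him := congrArg Complex.im hn
    simp [Complex.mul_im] at him
    apply hd
    refine ⟨n, ?_⟩
    have hπ : (π:ℝ) ≠ 0 := Real.pi_ne_zero
    field_simp at him
    have h2 : (2*π) * (d:ℝ) = (2*π) * ((n:ℝ)*N) := by rw [him]; ring
    have h3 := mul_left_cancel₀ (by positivity : (2*π:ℝ) ≠ 0) h2
    have h4 : d = n * N := by exact_mod_cast h3
    rw [h4]; ring
  calc ∑ j : Fin N, Complex.exp ((2*π*(d*j)/N : ℝ) * Complex.I)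
      = ∑ j ∈ Finset.range N, z ^ j := by
        rw [← Fin.sum_univ_eq_sum_range fun j => z ^ j]
        exact Finset.sum_congr rfl fun j _ => hpow j
    _ = (z ^ N - 1)/(z - 1) := geom_sum_eq hz1 N
    _ = 0 := by rw [hzN]; simp

noncomputable def wvec (N k : ℕ) (i : Fin N) : Fin N → ℝ :=
  fun j => (∑ f ∈ freqS k, Real.cos (2*π*(f*((j:ℤ)-(i:ℤ)))/N)) / N

lemma wvec_diag (N k : ℕ) (i : Fin N) : wvec N k i i = k / N := by
  unfold wvec
  simp [freqS_card]

lemma freqS_inj (N k : ℕ) (hkN : k < N) {f g : ℤ} (hf : f ∈ freqS k) (hg : g ∈ freqS k)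
    (hne : f ≠ g) : ¬ (N:ℤ) ∣ (f - g) := by
  intro hdvd
  have h1 := freqS_bound hf
  have h2 := freqS_bound hg
  have h3 : (N:ℤ) ≤ |f - g| :=
    Int.le_of_dvd (abs_pos.mpr (sub_ne_zero.mpr hne)) ((dvd_abs _ _).mpr hdvd)
  have h4 : |f - g| ≤ 2*(k/2 : ℤ) := by rw [abs_le]; omega
  omega

lemma wvec_sq_sum (N k : ℕ) (hN : 0 < N) (hkN : k < N) (i : Fin N) :
    ∑ j, (wvec N k i j)^2 = k / N := by
  have hN' : (N:ℝ) ≠ 0 := Nat.cast_ne_zero.mpr hN.ne'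
  set W : Fin N → ℂ := fun j => ∑ f ∈ freqS k,
    Complex.exp ((2*π*(f*((j:ℤ)-(i:ℤ)))/N : ℝ) * Complex.I) with hW
  have him : ∀ j, (W j).im = 0 := by
    intro j
    rw [hW]
    simp only [Complex.im_sum, Complex.exp_ofReal_mul_I_im]
    have hsum : ∑ f ∈ freqS k, Real.sin (2*π*(f*((j:ℤ)-(i:ℤ)))/N)
        = -∑ f ∈ freqS k, Real.sin (2*π*(f*((j:ℤ)-(i:ℤ)))/N) := by
      rw [← Finset.sum_neg_distrib]
      refine Finset.sum_nbij' (fun f => -f) (fun f => -f) ?_ ?_ ?_ ?_ ?_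
      · intro f hf; exact freqS_neg hf
      · intro f hf; exact freqS_neg hf
      · intro f hf; ring
      · intro f hf; ring
      · intro f hf
        rw [← Real.sin_neg]
        congr 1
        push_cast
        ring
    linarith [hsum]
  have hre : ∀ j, (W j).re = N * wvec N k i j := by
    intro j
    rw [hW]
    simp only [Complex.re_sum, Complex.exp_ofReal_mul_I_re]
    unfold wvec
    field_simp
    exact Finset.sum_congr rfl fun f _ => by ring_nf
  have key : ∑ j, W j * (starRingEnd ℂ) (W j) = (k:ℂ) * N := by
    have expand : ∀ j, W j * (starRingEnd ℂ) (W j) = ∑ f ∈ freqS k, ∑ g ∈ freqS k,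
        Complex.exp ((2*π*((f-g)*((j:ℤ)-(i:ℤ)))/N : ℝ) * Complex.I) := by
      intro j
      rw [hW]
      rw [map_sum, Finset.sum_mul_sum]
      refine Finset.sum_congr rfl fun f _ => Finset.sum_congr rfl fun g _ => ?_
      rw [← Complex.exp_conj, ← Complex.exp_add]
      congr 1
      simp only [map_mul, Complex.conj_I, Complex.conj_ofReal]
      push_cast
      ring
    simp only [expand]
    rw [Finset.sum_comm]
    have inner : ∀ f ∈ freqS k, ∑ j : Fin N, ∑ g ∈ freqS k,
        Complex.exp ((2*π*((f-g)*((j:ℤ)-(i:ℤ)))/N : ℝ) * Complex.I) = (N:ℂ) := by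
      intro f hf
      rw [Finset.sum_comm]
      have hinner2 : ∀ g ∈ freqS k, ∑ j : Fin N,
          Complex.exp ((2*π*((f-g)*((j:ℤ)-(i:ℤ)))/N : ℝ) * Complex.I)
          = if g = f then (N:ℂ) else 0 := by
        intro g hg
        split_ifs with hgf
        · subst hgf
          simp
        · have hd := freqS_inj N k hkN hf hg (fun h => hgf h.symm)
          set d : ℤ := f - g with hdd
          have split : ∀ j : Fin N, Complex.exp ((2*π*((f-g)*((j:ℤ)-(i:ℤ)))/N : ℝ) * Complex.I)
              = Complex.exp ((-(2*π*(d*(i:ℤ)))/N : ℝ) * Complex.I)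
                * Complex.exp ((2*π*(d*j)/N : ℝ) * Complex.I) := by
            intro j
            rw [← Complex.exp_add]
            congr 1
            rw [hdd]
            push_cast
            ring
          simp only [split]
          rw [← Finset.mul_sum, sum_exp_ne N hN d hd, mul_zero]
      rw [Finset.sum_congr rfl hinner2, Finset.sum_ite_eq' (freqS k) f (fun _ => (N:ℂ))]
      simp [hf]
    rw [Finset.sum_congr rfl inner, Finset.sum_const, freqS_card]
    simp [mul_comm]
  have hns : ∀ j, Complex.normSq (W j) = (N * wvec N k i j)^2 := by
    intro j
    rw [Complex.normSq_apply, him, hre]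
    ring
  have key2 : ((∑ j, Complex.normSq (W j) : ℝ) : ℂ) = ((k * N : ℝ) : ℂ) := by
    push_cast
    rw [← key]
    refine Finset.sum_congr rfl fun j _ => ?_
    rw [Complex.mul_conj]
  have key2' : (∑ j, Complex.normSq (W j) : ℝ) = k * N := Complex.ofReal_inj.mp key2
  have key3 : (N:ℝ)^2 * ∑ j, (wvec N k i j)^2 = k * N := by
    rw [← key2', Finset.mul_sum]
    refine Finset.sum_congr rfl fun j _ => ?_
    rw [hns]; ring
  rw [eq_div_iff hN']
  have h5 : (N:ℝ) * ((∑ j, (wvec N k i j)^2) * N - k) = 0 := by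
    ring_nf
    ring_nf at key3
    linarith
  rcases mul_eq_zero.mp h5 with h | h
  · exact absurd h hN'
  · linarith

noncomputable def cvec (N : ℕ) (f : ℤ) : Fin N → ℝ := fun j => Real.cos (2*π*(f*(j:ℤ))/N)
noncomputable def svec (N : ℕ) (f : ℤ) : Fin N → ℝ := fun j => Real.sin (2*π*(f*(j:ℤ))/N)

noncomputable def trigT (N k : ℕ) : Finset (Fin N → ℝ) :=
  ((freqS k).filter (fun f => 0 ≤ f)).image (cvec N) ∪
  ((freqS k).filter (fun f => 0 < f)).image (svec N)

lemma trigT_card (N k : ℕ) : (trigT N k).card ≤ k := by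
  refine (Finset.card_union_le _ _).trans ?_
  refine le_trans (add_le_add (Finset.card_image_le) (Finset.card_image_le)) ?_
  have hneg : ((freqS k).filter (fun f => f < 0)).card
      = ((freqS k).filter (fun f => 0 < f)).card := by
    refine Finset.card_bij' (fun a _ => -a) (fun a _ => -a) ?_ ?_ ?_ ?_
    · intro a ha
      simp only [Finset.mem_filter] at ha ⊢
      exact ⟨freqS_neg ha.1, by omega⟩
    · intro a ha
      simp only [Finset.mem_filter] at ha ⊢
      exact ⟨freqS_neg ha.1, by omega⟩
    · intro a _; ring
    · intro a _; ring
  have hpart := Finset.card_filter_add_card_filter_not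
    (s := freqS k) (p := fun f => 0 ≤ f)
  simp only [not_le] at hpart
  rw [freqS_card] at hpart
  omega

lemma cvec_mem (N k : ℕ) {f : ℤ} (hf : f ∈ freqS k) :
    cvec N f ∈ Submodule.span ℝ ((trigT N k : Set (Fin N → ℝ))) := by
  rcases le_or_gt 0 f with h | h
  · apply Submodule.subset_span
    apply Finset.mem_coe.mpr
    apply Finset.mem_union_left
    exact Finset.mem_image_of_mem _ (Finset.mem_filter.mpr ⟨hf, h⟩)
  · have : cvec N f = cvec N (-f) := by
      funext j
      unfold cvec
      rw [← Real.cos_neg]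
      congr 1
      push_cast
      ring
    rw [this]
    apply Submodule.subset_span
    apply Finset.mem_coe.mpr
    apply Finset.mem_union_left
    exact Finset.mem_image_of_mem _ (Finset.mem_filter.mpr ⟨freqS_neg hf, by omega⟩)

lemma svec_mem (N k : ℕ) {f : ℤ} (hf : f ∈ freqS k) :
    svec N f ∈ Submodule.span ℝ ((trigT N k : Set (Fin N → ℝ))) := by
  rcases lt_trichotomy 0 f with h | h | h
  · apply Submodule.subset_span
    apply Finset.mem_coe.mpr
    apply Finset.mem_union_right
    exact Finset.mem_image_of_mem _ (Finset.mem_filter.mpr ⟨hf, h⟩)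
  · have : svec N f = 0 := by
      funext j
      unfold svec
      rw [← h]
      norm_num
    rw [this]
    exact Submodule.zero_mem _
  · have : svec N f = -svec N (-f) := by
      funext j
      unfold svec
      simp only [Pi.neg_apply]
      rw [← Real.sin_neg]
      congr 1
      push_cast
      ring
    rw [this]
    refine Submodule.neg_mem _ ?_
    apply Submodule.subset_span
    apply Finset.mem_coe.mpr
    apply Finset.mem_union_right
    exact Finset.mem_image_of_mem _ (Finset.mem_filter.mpr ⟨freqS_neg hf, by omega⟩)

lemma wvec_mem (N k : ℕ) (i : Fin N) :
    wvec N k i ∈ Submodule.span ℝ ((trigT N k : Set (Fin N → ℝ))) := by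
  have hdecomp : wvec N k i = ∑ f ∈ freqS k,
      ((Real.cos (2*π*(f*(i:ℤ))/N) / N) • cvec N f
        + (Real.sin (2*π*(f*(i:ℤ))/N) / N) • svec N f) := by
    funext j
    rw [Finset.sum_apply]
    unfold wvec cvec svec
    rw [Finset.sum_div]
    refine Finset.sum_congr rfl fun f _ => ?_
    simp only [Pi.add_apply, Pi.smul_apply, smul_eq_mul]
    have hang : 2*π*((f:ℝ)*((j:ℤ)-(i:ℤ)))/N
        = 2*π*((f:ℝ)*(j:ℤ))/N - 2*π*((f:ℝ)*(i:ℤ))/N := by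
      push_cast
      ring
    rw [hang, Real.cos_sub]
    ring
  rw [hdecomp]
  refine Submodule.sum_mem _ fun f hf => ?_
  exact Submodule.add_mem _
    (Submodule.smul_mem _ _ (cvec_mem N k hf))
    (Submodule.smul_mem _ _ (svec_mem N k hf))

lemma trig_span_finrank (N k : ℕ) :
    Module.finrank ℝ (Submodule.span ℝ ((trigT N k : Set (Fin N → ℝ)))) ≤ k :=
  le_trans (finrank_span_finset_le_card (trigT N k)) (trigT_card N k)

lemma nrm_eq (N : ℕ) (v : Fin N → ℝ) :
    Real.sqrt (∑ i, (v i)^2) = ‖(WithLp.linearEquiv 2 ℝ (Fin N → ℝ)).symm v‖ := by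
  rw [EuclideanSpace.norm_eq]
  congr 1
  refine Finset.sum_congr rfl fun i _ => ?_
  change v i ^ 2 = ‖v i‖ ^ 2
  rw [Real.norm_eq_abs, _root_.sq_abs]

lemma single_sq_sum (N : ℕ) (i : Fin N) :
    ∑ j, ((Pi.single i (1:ℝ) : Fin N → ℝ) j)^2 = 1 := by
  have h : ∀ j, ((Pi.single i (1:ℝ) : Fin N → ℝ) j)^2
      = if j = i then (1:ℝ) else 0 := by
    intro j
    rw [Pi.single_apply]
    split_ifs <;> norm_num
  rw [Finset.sum_congr rfl fun j _ => h j, Finset.sum_ite_eq' Finset.univ i (fun _ => (1:ℝ))]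
  simp

lemma single_mul_sum (N : ℕ) (i : Fin N) (g : Fin N → ℝ) :
    ∑ j, (Pi.single i (1:ℝ) : Fin N → ℝ) j * g j = g i := by
  have h : ∀ j, (Pi.single i (1:ℝ) : Fin N → ℝ) j * g j
      = if j = i then g j else 0 := by
    intro j
    rw [Pi.single_apply]
    split_ifs <;> simp
  rw [Finset.sum_congr rfl fun j _ => h j, Finset.sum_ite_eq' Finset.univ i g]
  simp

lemma dist_sq (N k : ℕ) (hN : 0 < N) (hkN : k < N) (i : Fin N) :
    ∑ j, ((Pi.single i (1:ℝ) : Fin N → ℝ) j - wvec N k i j)^2 = 1 - (k:ℝ)/N := by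
  have expand : ∀ j, ((Pi.single i (1:ℝ) : Fin N → ℝ) j - wvec N k i j)^2
      = ((Pi.single i (1:ℝ) : Fin N → ℝ) j)^2
        - 2*((Pi.single i (1:ℝ) : Fin N → ℝ) j * wvec N k i j) + (wvec N k i j)^2 := by
    intro j; ring
  rw [Finset.sum_congr rfl fun j _ => expand j]
  rw [Finset.sum_add_distrib, Finset.sum_sub_distrib, ← Finset.mul_sum]
  rw [single_sq_sum, single_mul_sum, wvec_diag, wvec_sq_sum N k hN hkN]
  ring


end KolWidthAux

/-- Kolmogorov width of a set `M` in `ℝ^N` with respect to a norm-like function `nrm`. -/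
noncomputable def kolWidth (N : ℕ) (k : ℕ) (M : Set (Fin N → ℝ))
    (nrm : (Fin N → ℝ) → ℝ) : ℝ :=
  ⨅ L : {L : Submodule ℝ (Fin N → ℝ) // Module.finrank ℝ L ≤ k},
    ⨆ x : M, ⨅ y : L.1, nrm (x.1 - y.1)


theorem stmt0 (N k : ℕ) (hN : 0 < N) (hk : k ≤ N) :
    kolWidth N k {x | ∑ i, |x i| ≤ 1} (fun x => Real.sqrt (∑ i, (x i) ^ 2))
      = Real.sqrt (1 - (k : ℝ) / N) := by
  have hN' : (N:ℝ) ≠ 0 := Nat.cast_ne_zero.mpr hN.ne'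
  set nrm : (Fin N → ℝ) → ℝ := fun x => Real.sqrt (∑ i, (x i) ^ 2) with hnrm
  set M : Set (Fin N → ℝ) := {x | ∑ i, |x i| ≤ 1} with hM
  set ψ := (WithLp.linearEquiv 2 ℝ (Fin N → ℝ)).symm with hψ
  have hnrm_nonneg : ∀ v, 0 ≤ nrm v := fun v => Real.sqrt_nonneg _
  have hnrm_eq : ∀ v, nrm v = ‖ψ v‖ := fun v => nrm_eq N v
  have hbdd0 : ∀ (L : Submodule ℝ (Fin N → ℝ)) (x : Fin N → ℝ),
      BddBelow (Set.range fun y : L => nrm (x - y.1)) := by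
    intro L x
    exact ⟨0, by rintro a ⟨y, rfl⟩; exact hnrm_nonneg _⟩
  unfold kolWidth
  apply le_antisymm
  · -- upper bound
    rcases eq_or_lt_of_le hk with hkN | hkN
    · -- k = N : take L = ⊤
      have hfr : Module.finrank ℝ (⊤ : Submodule ℝ (Fin N → ℝ)) ≤ k := by
        rw [finrank_top, Module.finrank_fin_fun, hkN]
      refine ciInf_le_of_le ?_ ⟨⊤, hfr⟩ ?_
      · exact ⟨0, by
          rintro a ⟨L, rfl⟩
          exact Real.iSup_nonneg fun x => Real.iInf_nonneg fun y => hnrm_nonneg _⟩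
      · have : (1 : ℝ) - (k:ℝ)/(N:ℝ) = 0 := by
          rw [hkN]
          field_simp
          norm_num
        rw [this, Real.sqrt_zero]
        refine Real.iSup_le (fun x => ?_) le_rfl
        refine ciInf_le_of_le (hbdd0 _ _) ⟨x.1, Submodule.mem_top⟩ ?_
        simp only [sub_self]
        rw [hnrm]
        simp
    · -- k < N : trig subspace
      set L0 : Submodule ℝ (Fin N → ℝ) := Submodule.span ℝ ((trigT N k : Set (Fin N → ℝ)))
        with hL0
      refine ciInf_le_of_le ?_ ⟨L0, trig_span_finrank N k⟩ ?_
      · exact ⟨0, by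
          rintro a ⟨L, rfl⟩
          exact Real.iSup_nonneg fun x => Real.iInf_nonneg fun y => hnrm_nonneg _⟩
      · refine Real.iSup_le (fun x => ?_) (Real.sqrt_nonneg _)
        set y0 : Fin N → ℝ := ∑ i, x.1 i • wvec N k i with hy0
        have hy0mem : y0 ∈ L0 := by
          rw [hy0]
          exact Submodule.sum_mem _ fun i _ => Submodule.smul_mem _ _ (wvec_mem N k i)
        refine ciInf_le_of_le (hbdd0 _ _) ⟨y0, hy0mem⟩ ?_
        have hdecomp : x.1 - y0 = ∑ i, x.1 i • (Pi.single i (1:ℝ) - wvec N k i) := by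
          funext j
          rw [hy0]
          simp only [Pi.sub_apply, Finset.sum_apply, Pi.smul_apply, smul_eq_mul, mul_sub]
          rw [Finset.sum_sub_distrib]
          congr 1
          have h1 : ∀ i : Fin N, x.1 i * (Pi.single i (1:ℝ) : Fin N → ℝ) j
              = if j = i then x.1 i else 0 := by
            intro i
            rw [Pi.single_apply]
            split_ifs with h
            · subst h; simp
            · simp
          rw [Finset.sum_congr rfl fun i _ => h1 i,
            Finset.sum_ite_eq Finset.univ j (fun i => x.1 i)]
          simp
        have hterm : ∀ i : Fin N, ‖ψ (x.1 i • (Pi.single i (1:ℝ) - wvec N k i))‖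
            = |x.1 i| * Real.sqrt (1 - (k:ℝ)/N) := by
          intro i
          rw [map_smul, norm_smul, Real.norm_eq_abs]
          congr 1
          rw [← hnrm_eq]
          rw [hnrm]
          simp only []
          rw [show (∑ j, (((Pi.single i (1:ℝ) : Fin N → ℝ) - wvec N k i) j)^2)
              = ∑ j, ((Pi.single i (1:ℝ) : Fin N → ℝ) j - wvec N k i j)^2 from
            Finset.sum_congr rfl fun j _ => by rw [Pi.sub_apply]]
          rw [dist_sq N k hN hkN i]
        rw [hnrm_eq, hdecomp, map_sum]
        refine le_trans (norm_sum_le _ _) ?_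
        rw [Finset.sum_congr rfl fun i _ => hterm i, ← Finset.sum_mul]
        exact mul_le_of_le_one_left (Real.sqrt_nonneg _) x.2
  · -- lower bound
    have hne : Nonempty {L : Submodule ℝ (Fin N → ℝ) // Module.finrank ℝ L ≤ k} :=
      ⟨⟨⊥, by simp⟩⟩
    refine le_ciInf fun L => ?_
    set E := EuclideanSpace ℝ (Fin N)
    set L' : Submodule ℝ E := Submodule.map (ψ : (Fin N → ℝ) →ₗ[ℝ] E) L.1 with hL'
    have hfr' : Module.finrank ℝ L' ≤ k := by
      rw [hL', LinearEquiv.finrank_map_eq]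
      exact L.2
    set r := Module.finrank ℝ L' with hr
    set b := stdOrthonormalBasis ℝ L' with hb
    set V : Fin r → E := fun j => ((b j : L') : E) with hV
    have hVnorm : ∀ j, ∑ i, (V j i)^2 = 1 := by
      intro j
      have h1 : (inner ℝ (V j) (V j) : ℝ) = ∑ i, V j i * V j i := by
        rw [PiLp.inner_apply]
        simp [RCLike.inner_apply]
        exact Finset.sum_congr rfl fun i _ => sq _
      have h2 : (inner ℝ (V j) (V j) : ℝ) = 1 := by
        rw [hV]
        have : ‖(b j : E)‖ = 1 := by
          rw [Submodule.norm_coe]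
          exact b.orthonormal.1 j
        rw [real_inner_self_eq_norm_sq, this]
        norm_num
      rw [← h2, h1]
      exact Finset.sum_congr rfl fun i _ => (sq (V j i)).symm ▸ (pow_two (V j i)).symm
    have htrace : ∑ i, ∑ j, (V j i)^2 ≤ (k:ℝ) := by
      rw [Finset.sum_comm]
      rw [Finset.sum_congr rfl fun j _ => hVnorm j]
      simp only [Finset.sum_const, Finset.card_univ, Fintype.card_fin, nsmul_eq_mul, mul_one]
      exact_mod_cast hfr'
    have hpigeon : ∃ i₀ : Fin N, ∑ j, (V j i₀)^2 ≤ (k:ℝ)/N := by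
      by_contra hcon
      push_neg at hcon
      have : (k:ℝ) < ∑ i : Fin N, ∑ j, (V j i)^2 := by
        calc (k:ℝ) = ∑ _i : Fin N, (k:ℝ)/N := by
              rw [Finset.sum_const, Finset.card_univ, Fintype.card_fin, nsmul_eq_mul]
              field_simp
          _ < ∑ i, ∑ j, (V j i)^2 :=
              Finset.sum_lt_sum_of_nonempty ⟨⟨0, hN⟩, Finset.mem_univ _⟩ fun i _ => hcon i
      linarith
    obtain ⟨i₀, hi₀⟩ := hpigeon
    set x0 : Fin N → ℝ := Pi.single i₀ (1:ℝ) with hx0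
    have hx0M : x0 ∈ M := by
      rw [hM]
      simp only [Set.mem_setOf_eq]
      have : ∀ j, |x0 j| = if j = i₀ then (1:ℝ) else 0 := by
        intro j
        rw [hx0, Pi.single_apply]
        split_ifs <;> simp
      rw [Finset.sum_congr rfl fun j _ => this j,
        Finset.sum_ite_eq' Finset.univ i₀ (fun _ => (1:ℝ))]
      simp
    have hbddA : BddAbove (Set.range fun x : M => ⨅ y : L.1, nrm (x.1 - y.1)) := by
      refine ⟨1, ?_⟩
      rintro a ⟨x, rfl⟩
      refine ciInf_le_of_le (hbdd0 _ _) ⟨0, L.1.zero_mem⟩ ?_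
      simp only [sub_zero]
      rw [hnrm]
      simp only []
      have h1 : ∑ i, (x.1 i)^2 ≤ 1 := by
        have hx1 : ∑ i, |x.1 i| ≤ 1 := x.2
        have h2 : ∑ i, (x.1 i)^2 ≤ (∑ i, |x.1 i|)^2 := by
          have := Finset.sum_sq_le_sq_sum_of_nonneg
            (s := Finset.univ) (f := fun i => |x.1 i|) (fun i _ => abs_nonneg _)
          simpa [_root_.sq_abs] using this
        nlinarith [Finset.sum_nonneg (fun i (_ : i ∈ Finset.univ) => abs_nonneg (x.1 i))]
      calc Real.sqrt (∑ i, (x.1 i)^2) ≤ Real.sqrt 1 := Real.sqrt_le_sqrt h1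
        _ = 1 := Real.sqrt_one
    refine le_ciSup_of_le hbddA ⟨x0, hx0M⟩ ?_
    have : Nonempty L.1 := ⟨0⟩
    refine le_ciInf fun y => ?_
    -- main distance estimate
    set Y : E := ψ y.1 with hY
    have hYmem : Y ∈ L' := Submodule.mem_map_of_mem y.2
    set X : E := ψ x0 with hX
    have hXcoord : ∀ i, X i = x0 i := by
      intro i
      rw [hX, hψ]; rfl
    have hXnorm : ‖X‖^2 = 1 := by
      have h1 : ‖X‖ = Real.sqrt (∑ i, (x0 i)^2) := by
        rw [hX, ← hnrm_eq, hnrm]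
      rw [h1, Real.sq_sqrt (Finset.sum_nonneg fun i _ => sq_nonneg _), hx0]
      exact single_sq_sum N i₀
    set c : Fin r → ℝ := fun j => b.repr ⟨Y, hYmem⟩ j with hc
    have hYrep : Y = ∑ j, c j • V j := by
      have h0 := b.sum_repr ⟨Y, hYmem⟩
      have h1 := congrArg (Subtype.val : L' → E) h0
      simp only [AddSubmonoidClass.coe_finset_sum, SetLike.val_smul] at h1
      rw [← h1]
    have hYnorm : ‖Y‖^2 = ∑ j, (c j)^2 := by
      have h1 : ‖Y‖ = ‖b.repr ⟨Y, hYmem⟩‖ := by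
        calc ‖Y‖ = ‖((⟨Y, hYmem⟩ : L') : E)‖ := rfl
          _ = ‖(⟨Y, hYmem⟩ : L')‖ := Submodule.norm_coe _
          _ = ‖b.repr ⟨Y, hYmem⟩‖ := (b.repr.norm_map _).symm
      rw [h1, EuclideanSpace.norm_eq,
        Real.sq_sqrt (Finset.sum_nonneg fun j _ => sq_nonneg _)]
      refine Finset.sum_congr rfl fun j _ => ?_
      rw [Real.norm_eq_abs, _root_.sq_abs, hc]
    have hinnerXV : ∀ j, (inner ℝ X (V j) : ℝ) = V j i₀ := by
      intro j
      rw [PiLp.inner_apply]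
      simp only [RCLike.inner_apply, starRingEnd_apply, star_trivial]
      have : ∀ i, V j i * X i = x0 i * V j i := fun i => by rw [hXcoord, mul_comm]
      rw [Finset.sum_congr rfl fun i _ => this i, hx0]
      exact single_mul_sum N i₀ (fun i => V j i)
    have hinnerXY : (inner ℝ X Y : ℝ) = ∑ j, c j * V j i₀ := by
      rw [hYrep, inner_sum]
      refine Finset.sum_congr rfl fun j _ => ?_
      rw [real_inner_smul_right, hinnerXV]
    have hkey : 1 - (k:ℝ)/N ≤ ‖X - Y‖^2 := by
      have hexp : ‖X - Y‖^2 = ‖X‖^2 - 2*(inner ℝ X Y : ℝ) + ‖Y‖^2 := norm_sub_sq_real X Y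
      rw [hexp, hXnorm, hYnorm, hinnerXY]
      have hsq : 0 ≤ ∑ j, (c j - V j i₀)^2 :=
        Finset.sum_nonneg fun j _ => sq_nonneg _
      have hexpand : ∑ j, (c j - V j i₀)^2
          = ∑ j, (c j)^2 - 2*(∑ j, c j * V j i₀) + ∑ j, (V j i₀)^2 := by
        have e1 : ∀ j : Fin r, (c j - V j i₀)^2
            = ((c j)^2 - 2*(c j * V j i₀)) + (V j i₀)^2 := fun j => by ring
        rw [Finset.sum_congr rfl fun j _ => e1 j, Finset.sum_add_distrib,
          Finset.sum_sub_distrib, ← Finset.mul_sum]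
      nlinarith [hi₀]
    calc Real.sqrt (1 - (k:ℝ)/N) ≤ Real.sqrt (‖X - Y‖^2) := Real.sqrt_le_sqrt hkey
      _ = ‖X - Y‖ := Real.sqrt_sq (norm_nonneg _)
      _ = nrm (x0 - y.1) := by rw [hnrm_eq, map_sub]
end

section
/- Every linear subspace L of ℝ^N with dim L ≥ N/4 contains a vector x with Euclidean norm |x| = 1 and sup norm ||x||_∞ ≥ 1/2. -/
open Finset

theorem stmt1 (N : ℕ) (hN : 0 < N) (L : Submodule ℝ (Fin N → ℝ))
    (hL : (N : ℝ) / 4 ≤ Module.finrank ℝ L) :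
    ∃ x ∈ L, Real.sqrt (∑ i, (x i) ^ 2) = 1 ∧ (1 / 2 : ℝ) ≤ ⨆ i, |x i| := by
  classical
  let e : (Fin N → ℝ) ≃ₗ[ℝ] EuclideanSpace ℝ (Fin N) :=
    (WithLp.linearEquiv 2 ℝ (Fin N → ℝ)).symm
  let K : Submodule ℝ (EuclideanSpace ℝ (Fin N)) := L.map (e : (Fin N → ℝ) →ₗ[ℝ] EuclideanSpace ℝ (Fin N))
  have hK : Module.finrank ℝ K = Module.finrank ℝ L := LinearEquiv.finrank_map_eq e L
  set k := Module.finrank ℝ K with hk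
  let b : OrthonormalBasis (Fin k) ℝ K := stdOrthonormalBasis ℝ K
  let f : Fin N → Fin k → ℝ := fun i j => (b j : EuclideanSpace ℝ (Fin N)) i
  have hcol : ∀ j, ∑ i, f i j ^ 2 = 1 := by
    intro j
    have h1 : ‖(b j : EuclideanSpace ℝ (Fin N))‖ = 1 := by
      rw [Submodule.norm_coe]; exact b.orthonormal.1 j
    have h2 := EuclideanSpace.norm_eq (𝕜 := ℝ) (b j : EuclideanSpace ℝ (Fin N))
    rw [h1, eq_comm, Real.sqrt_eq_one] at h2
    simpa [Real.norm_eq_abs, sq_abs] using h2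
  have htot : (N : ℝ) / 4 ≤ ∑ i, ∑ j, f i j ^ 2 := by
    rw [Finset.sum_comm]
    simp only [hcol, Finset.sum_const, Finset.card_univ, Fintype.card_fin, nsmul_eq_mul, mul_one]
    rw [hK]; exact hL
  have hexist : ∃ i : Fin N, (1 / 4 : ℝ) ≤ ∑ j, f i j ^ 2 := by
    by_contra h
    push_neg at h
    have : ∑ i : Fin N, ∑ j, f i j ^ 2 < ∑ i : Fin N, (1/4 : ℝ) :=
      Finset.sum_lt_sum_of_nonempty
        (by simp [Finset.univ_nonempty_iff, Fin.pos_iff_nonempty.mp hN]) fun i _ => h i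
    simp only [Finset.sum_const, Finset.card_univ, Fintype.card_fin, nsmul_eq_mul] at this
    nlinarith
  obtain ⟨i0, hi0⟩ := hexist
  set S : ℝ := ∑ j, f i0 j ^ 2 with hS
  have hSpos : (0:ℝ) < S := lt_of_lt_of_le (by norm_num) hi0
  set s : ℝ := Real.sqrt S with hs
  have hspos : 0 < s := Real.sqrt_pos.mpr hSpos
  have hs2 : s ^ 2 = S := Real.sq_sqrt hSpos.le
  have hshalf : (1/2 : ℝ) ≤ s := by
    rw [hs]
    calc (1/2 : ℝ) = Real.sqrt (1/4) := by
          rw [show (1/4 : ℝ) = (1/2)^2 by norm_num, Real.sqrt_sq (by norm_num)]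
      _ ≤ Real.sqrt S := Real.sqrt_le_sqrt hi0
  let y : K := ∑ j, (f i0 j) • b j
  have hyc : ∀ i, (y : EuclideanSpace ℝ (Fin N)) i = ∑ j, f i0 j * f i j := by
    intro i
    have h1 : (y : EuclideanSpace ℝ (Fin N))
        = ∑ j, (f i0 j) • (b j : EuclideanSpace ℝ (Fin N)) := by
      simp [y]
    rw [h1]
    show (EuclideanSpace.proj (𝕜 := ℝ) i)
      (∑ j, (f i0 j) • (b j : EuclideanSpace ℝ (Fin N))) = _
    rw [map_sum]
    refine Finset.sum_congr rfl fun j _ => ?_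
    rw [map_smul]
    rfl
  -- norm of y
  have hyn : ‖(y : EuclideanSpace ℝ (Fin N))‖ = s := by
    have hrepr : ∀ j, b.repr y j = f i0 j := fun j => by
      rw [OrthonormalBasis.repr_apply_apply]
      exact b.orthonormal.inner_right_fintype _ j
    have : ‖y‖ = ‖b.repr y‖ := (b.repr.norm_map y).symm
    rw [Submodule.norm_coe, this, EuclideanSpace.norm_eq]
    simp only [hrepr, Real.norm_eq_abs, sq_abs]
    rfl
  have hsum : ∑ i, ((y : EuclideanSpace ℝ (Fin N)) i) ^ 2 = S := by
    have h2 := EuclideanSpace.norm_eq (𝕜 := ℝ) (y : EuclideanSpace ℝ (Fin N))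
    rw [hyn, hs] at h2
    have h3 : Real.sqrt (∑ i, ((y : EuclideanSpace ℝ (Fin N)) i) ^ 2) = Real.sqrt S := by
      simpa [Real.norm_eq_abs, sq_abs] using h2.symm
    have hA : (0:ℝ) ≤ ∑ i, ((y : EuclideanSpace ℝ (Fin N)) i) ^ 2 :=
      Finset.sum_nonneg fun i _ => by positivity
    rw [← Real.sq_sqrt hA, h3, Real.sq_sqrt hSpos.le]
  -- go back to the Pi type
  obtain ⟨m, hmL, hme⟩ : ∃ m ∈ L, e m = (y : EuclideanSpace ℝ (Fin N)) := y.2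
  have hmco : ∀ i, m i = (y : EuclideanSpace ℝ (Fin N)) i := by
    intro i; rw [← hme]; rfl
  refine ⟨s⁻¹ • m, L.smul_mem _ hmL, ?_, ?_⟩
  · have : ∑ i, (s⁻¹ * m i) ^ 2 = 1 := by
      have h3 : ∑ i, (s⁻¹ * m i) ^ 2 = s⁻¹ ^ 2 * ∑ i, (m i) ^ 2 := by
        rw [Finset.mul_sum]; congr 1; funext i; ring
      rw [h3]
      have h4 : ∑ i, (m i) ^ 2 = S := by
        rw [← hsum]; congr 1; funext i; rw [hmco i]
      rw [h4, ← hs2]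
      field_simp
    simp [Pi.smul_apply, smul_eq_mul, this]
  · have hx0 : (s⁻¹ • m) i0 = s := by
      have : m i0 = S := by
        rw [hmco i0, hyc i0, hS]
        exact Finset.sum_congr rfl fun j _ => (pow_two (f i0 j)).symm
      simp only [Pi.smul_apply, smul_eq_mul, this]
      rw [← hs2, pow_two]; field_simp
    calc (1/2 : ℝ) ≤ s := hshalf
      _ = |(s⁻¹ • m) i0| := by rw [hx0, abs_of_pos hspos]
      _ ≤ ⨆ i, |(s⁻¹ • m) i| := le_ciSup (f := fun i => |(s⁻¹ • m) i|) (Finite.bddAbove_range _) i0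
end

section
/- For finite-dimensional normed spaces X = (ℝ^N, ||·||_X) and Y = (ℝ^N, ||·||_Y) with unit balls B_X and B_Y, the Kolmogorov and Gelfand widths satisfy d_k(B_X, Y) = d^k(B_{Y*}, X*) for every 0 ≤ k ≤ N. -/
open Finset

/-- `IsNorm n` : the function `n` is a norm on `ℝ^N`. -/
def IsNorm {N : ℕ} (n : (Fin N → ℝ) → ℝ) : Prop :=
  (∀ x, 0 ≤ n x) ∧ (∀ x, n x = 0 ↔ x = 0) ∧
  (∀ (a : ℝ) x, n (a • x) = |a| * n x) ∧ (∀ x y, n (x + y) ≤ n x + n y)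

/-- The dual norm of `n`, via the standard pairing on `ℝ^N`. -/
noncomputable def dualNorm {N : ℕ} (n : (Fin N → ℝ) → ℝ) (y : Fin N → ℝ) : ℝ :=
  ⨆ x : {x : Fin N → ℝ // n x ≤ 1}, ∑ i, x.1 i * y i

/-- Gelfand width of `M` in `ℝ^N` with respect to the norm `nrm`. -/
noncomputable def gelWidth (N : ℕ) (k : ℕ) (M : Set (Fin N → ℝ))
    (nrm : (Fin N → ℝ) → ℝ) : ℝ :=
  ⨅ L : {L : Submodule ℝ (Fin N → ℝ) // N ≤ k + Module.finrank ℝ L},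
    ⨆ x : {x : Fin N → ℝ // x ∈ M ∧ x ∈ L.1}, nrm x.1



namespace Stmt12Aux

variable {N : ℕ} {n : (Fin N → ℝ) → ℝ}

theorem n_zero (h : IsNorm n) : n 0 = 0 := (h.2.1 0).mpr rfl

theorem n_neg (h : IsNorm n) (x : Fin N → ℝ) : n (-x) = n x := by
  have := h.2.2.1 (-1) x; simpa using this

theorem n_sum_le (h : IsNorm n) {ι : Type*} (s : Finset ι) (f : ι → (Fin N → ℝ)) :
    n (∑ i ∈ s, f i) ≤ ∑ i ∈ s, n (f i) := by
  classical
  induction s using Finset.induction with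
  | empty => simp [n_zero h]
  | insert _ _ hi ih =>
    rw [Finset.sum_insert hi, Finset.sum_insert hi]
    exact (h.2.2.2 _ _).trans (by linarith)

theorem exists_upper (h : IsNorm n) : ∃ C : ℝ, 0 ≤ C ∧ ∀ x, n x ≤ C * ‖x‖ := by
  classical
  refine ⟨∑ i, n (fun j => if i = j then 1 else 0), Finset.sum_nonneg fun i _ => h.1 _, fun x => ?_⟩
  calc n x = n (∑ i, x i • fun j => if i = j then (1:ℝ) else 0) := by rw [← pi_eq_sum_univ x]
    _ ≤ ∑ i, n (x i • fun j => if i = j then (1:ℝ) else 0) := n_sum_le h _ _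
    _ = ∑ i, |x i| * n (fun j => if i = j then (1:ℝ) else 0) := by
        simp only [h.2.2.1]
    _ ≤ ∑ i, ‖x‖ * n (fun j => if i = j then (1:ℝ) else 0) := by
        refine Finset.sum_le_sum fun i _ => mul_le_mul_of_nonneg_right ?_ (h.1 _)
        simpa using norm_le_pi_norm x i
    _ = (∑ i, n (fun j => if i = j then (1:ℝ) else 0)) * ‖x‖ := by
        rw [← Finset.mul_sum, mul_comm]

theorem n_continuous (h : IsNorm n) : Continuous n := by
  obtain ⟨C, hC0, hC⟩ := exists_upper h
  refine (LipschitzWith.of_dist_le_mul (K := C.toNNReal) fun a b => ?_).continuous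
  have h1 : n a - n b ≤ n (a - b) := by
    have := h.2.2.2 (a - b) b; simp at this; linarith
  have h2 : n b - n a ≤ n (a - b) := by
    have := h.2.2.2 (b - a) a
    have e : n (b - a) = n (a - b) := by rw [← n_neg h (a - b)]; ring_nf
    simp at this; linarith
  have h3 := hC (a - b)
  rw [Real.dist_eq, dist_eq_norm, Real.coe_toNNReal _ hC0, abs_le]
  constructor <;> linarith

theorem exists_lower (h : IsNorm n) : ∃ c : ℝ, 0 < c ∧ ∀ x, c * ‖x‖ ≤ n x := by
  rcases Nat.eq_zero_or_pos N with hN | hN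
  · refine ⟨1, one_pos, fun x => ?_⟩
    subst hN
    have hx : x = 0 := Subsingleton.elim x 0
    rw [hx, norm_zero, n_zero h, mul_zero]
  · have hsne : (Metric.sphere (0 : Fin N → ℝ) 1).Nonempty := by
      refine ⟨Pi.single ⟨0, hN⟩ 1, ?_⟩
      simp [Pi.norm_single]
    obtain ⟨x₀, hx₀, hmin⟩ := (isCompact_sphere (0 : Fin N → ℝ) 1).exists_isMinOn hsne
      (n_continuous h).continuousOn
    have hx₀n : x₀ ≠ 0 := by
      intro he
      rw [he] at hx₀
      simp at hx₀
    have hc : 0 < n x₀ := lt_of_le_of_ne (h.1 _) fun he => hx₀n ((h.2.1 x₀).mp he.symm)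
    refine ⟨n x₀, hc, fun x => ?_⟩
    rcases eq_or_ne x 0 with rfl | hx
    · simp [n_zero h]
    · have hxn : ‖x‖ ≠ 0 := norm_ne_zero_iff.mpr hx
      have hu : ‖x‖⁻¹ • x ∈ Metric.sphere (0 : Fin N → ℝ) 1 := by
        simp [norm_smul, abs_inv, abs_of_nonneg (norm_nonneg x), inv_mul_cancel₀ hxn]
      have h1 : n x₀ ≤ n (‖x‖⁻¹ • x) := hmin hu
      have h2 : n (‖x‖⁻¹ • x) = ‖x‖⁻¹ * n x := by
        rw [h.2.2.1]
        congr 1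
        rw [abs_inv, abs_of_nonneg (norm_nonneg x)]
      rw [h2] at h1
      have hpos : (0:ℝ) < ‖x‖ := lt_of_le_of_ne (norm_nonneg x) (Ne.symm hxn)
      calc n x₀ * ‖x‖ ≤ (‖x‖⁻¹ * n x) * ‖x‖ := by nlinarith
        _ = n x := by field_simp

end Stmt12Aux

namespace Stmt12Aux

variable {N : ℕ} {n : (Fin N → ℝ) → ℝ}

theorem ball_nonempty (h : IsNorm n) : Nonempty {x : Fin N → ℝ // n x ≤ 1} :=
  ⟨⟨0, by rw [n_zero h]; norm_num⟩⟩

theorem dual_bddAbove (h : IsNorm n) (z : Fin N → ℝ) :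
    BddAbove (Set.range fun x : {x : Fin N → ℝ // n x ≤ 1} => ∑ i, x.1 i * z i) := by
  obtain ⟨c, hc, hlow⟩ := exists_lower h
  refine ⟨c⁻¹ * ∑ i, |z i|, Set.forall_mem_range.mpr fun x => ?_⟩
  have hx : ‖x.1‖ ≤ c⁻¹ := by
    have := hlow x.1
    rw [← le_div_iff₀' hc] at this
    calc ‖x.1‖ ≤ n x.1 / c := this
      _ ≤ 1 / c := by gcongr; exact x.2
      _ = c⁻¹ := one_div c
  calc ∑ i, x.1 i * z i ≤ ∑ i, |x.1 i| * |z i| := by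
        refine Finset.sum_le_sum fun i _ => ?_
        calc x.1 i * z i ≤ |x.1 i * z i| := le_abs_self _
          _ = |x.1 i| * |z i| := abs_mul _ _
    _ ≤ ∑ i, c⁻¹ * |z i| := by
        refine Finset.sum_le_sum fun i _ => mul_le_mul_of_nonneg_right ?_ (abs_nonneg _)
        exact (norm_le_pi_norm x.1 i).trans hx |>.trans_eq' (Real.norm_eq_abs _).symm |> le_of_eq_of_le rfl
    _ = c⁻¹ * ∑ i, |z i| := by rw [Finset.mul_sum]

theorem dualNorm_nonneg (h : IsNorm n) (z : Fin N → ℝ) : 0 ≤ dualNorm n z := by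
  haveI := ball_nonempty h
  have := le_ciSup (dual_bddAbove h z) ⟨0, by rw [n_zero h]; norm_num⟩
  simpa [dualNorm] using this

theorem dualNorm_zero (h : IsNorm n) : dualNorm n (0 : Fin N → ℝ) = 0 := by
  haveI := ball_nonempty h
  simp [dualNorm]

theorem dualNorm_le_one (h : IsNorm n) {z : Fin N → ℝ}
    (hz : ∀ w, ∑ i, w i * z i ≤ n w) : dualNorm n z ≤ 1 := by
  haveI := ball_nonempty h
  exact ciSup_le fun x => (hz x.1).trans x.2

theorem pair_le_mul (h : IsNorm n) (w z : Fin N → ℝ) :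
    ∑ i, w i * z i ≤ n w * dualNorm n z := by
  haveI := ball_nonempty h
  rcases eq_or_ne (n w) 0 with hw | hw
  · have hw' : w = 0 := (h.2.1 w).mp hw
    subst hw'
    rw [hw, zero_mul]
    simp
  · have hw0 : 0 < n w := lt_of_le_of_ne (h.1 w) (Ne.symm hw)
    have hu : n ((n w)⁻¹ • w) ≤ 1 := by
      rw [h.2.2.1, abs_inv, abs_of_pos hw0, inv_mul_cancel₀ hw]
    have := le_ciSup (dual_bddAbove h z) ⟨(n w)⁻¹ • w, hu⟩
    simp only [Pi.smul_apply, smul_eq_mul] at this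
    have h2 : ∑ i, (n w)⁻¹ * w i * z i = (n w)⁻¹ * ∑ i, w i * z i := by
      rw [Finset.mul_sum]
      exact Finset.sum_congr rfl fun i _ => by ring
    rw [h2] at this
    calc ∑ i, w i * z i = n w * ((n w)⁻¹ * ∑ i, w i * z i) := by field_simp
      _ ≤ n w * dualNorm n z := mul_le_mul_of_nonneg_left this hw0.le

end Stmt12Aux

namespace Stmt12Aux

variable {N : ℕ}

noncomputable def eqE (N : ℕ) : EuclideanSpace ℝ (Fin N) ≃ₗ[ℝ] (Fin N → ℝ) :=
  WithLp.linearEquiv 2 ℝ (Fin N → ℝ)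

noncomputable def perp (L : Submodule ℝ (Fin N → ℝ)) : Submodule ℝ (Fin N → ℝ) :=
  ((L.comap (eqE N).toLinearMap)ᗮ).map (eqE N).toLinearMap

theorem mem_perp {L : Submodule ℝ (Fin N → ℝ)} {z : Fin N → ℝ} :
    z ∈ perp L ↔ ∀ y ∈ L, ∑ i, y i * z i = 0 := by
  rw [perp, Submodule.mem_map_equiv, Submodule.mem_orthogonal]
  constructor
  · intro hz y hy
    have := hz ((eqE N).symm y) (by simpa [Submodule.mem_comap, eqE] using hy)
    simpa [PiLp.inner_apply, RCLike.inner_apply, eqE, WithLp.linearEquiv, mul_comm] using this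
  · intro hz u hu
    have := hz ((eqE N) u) (by simpa [Submodule.mem_comap] using hu)
    simpa [PiLp.inner_apply, RCLike.inner_apply, eqE, WithLp.linearEquiv, mul_comm] using this

theorem finrank_perp (L : Submodule ℝ (Fin N → ℝ)) :
    Module.finrank ℝ (perp L) = N - Module.finrank ℝ L := by
  have h1 : Module.finrank ℝ (perp L) =
      Module.finrank ℝ ((L.comap (eqE N).toLinearMap)ᗮ) :=
    LinearEquiv.finrank_map_eq _ _
  have h2 := Submodule.finrank_add_finrank_orthogonal (L.comap (eqE N).toLinearMap)
  have h3 : Module.finrank ℝ (L.comap (eqE N).toLinearMap) = Module.finrank ℝ L := by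
    rw [Submodule.comap_equiv_eq_map_symm]
    exact LinearEquiv.finrank_map_eq _ _
  have h4 : Module.finrank ℝ (EuclideanSpace ℝ (Fin N)) = N := by
    simp [finrank_euclideanSpace]
  omega

theorem finrank_le (L : Submodule ℝ (Fin N → ℝ)) : Module.finrank ℝ L ≤ N := by
  have := Submodule.finrank_le L
  simpa using this

theorem perp_perp (L : Submodule ℝ (Fin N → ℝ)) : perp (perp L) = L := by
  have hc : (perp L).comap (eqE N).toLinearMap = (L.comap (eqE N).toLinearMap)ᗮ := by
    ext u
    simp [perp, Submodule.mem_comap, Submodule.mem_map_equiv]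
  rw [perp, hc, Submodule.orthogonal_orthogonal]
  ext z
  simp [Submodule.mem_map_equiv, Submodule.mem_comap]

end Stmt12Aux

namespace Stmt12Aux

variable {N : ℕ} {n : (Fin N → ℝ) → ℝ}

noncomputable def distL (n : (Fin N → ℝ) → ℝ) (L : Submodule ℝ (Fin N → ℝ))
    (x : Fin N → ℝ) : ℝ :=
  ⨅ y : L, n (x - y.1)

theorem distL_bddBelow (h : IsNorm n) (L : Submodule ℝ (Fin N → ℝ)) (x : Fin N → ℝ) :
    BddBelow (Set.range fun y : L => n (x - y.1)) :=
  ⟨0, Set.forall_mem_range.mpr fun y => h.1 _⟩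

theorem distL_nonneg (h : IsNorm n) (L : Submodule ℝ (Fin N → ℝ)) (x : Fin N → ℝ) :
    0 ≤ distL n L x :=
  le_ciInf fun y => h.1 _

theorem distL_le (h : IsNorm n) {L : Submodule ℝ (Fin N → ℝ)} (x : Fin N → ℝ)
    {y : Fin N → ℝ} (hy : y ∈ L) : distL n L x ≤ n (x - y) :=
  ciInf_le (distL_bddBelow h L x) ⟨y, hy⟩

theorem distL_le_norm (h : IsNorm n) (L : Submodule ℝ (Fin N → ℝ)) (x : Fin N → ℝ) :
    distL n L x ≤ n x := by
  have := distL_le h x L.zero_mem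
  simpa using this

theorem distL_mem (h : IsNorm n) {L : Submodule ℝ (Fin N → ℝ)} {y : Fin N → ℝ}
    (hy : y ∈ L) : distL n L y = 0 := by
  refine le_antisymm ?_ (distL_nonneg h L y)
  have := distL_le h y hy
  simpa [n_zero h] using this

theorem distL_add (h : IsNorm n) (L : Submodule ℝ (Fin N → ℝ)) (v w : Fin N → ℝ) :
    distL n L (v + w) ≤ distL n L v + distL n L w := by
  have key : ∀ y₁ ∈ L, ∀ y₂ ∈ L, distL n L (v + w) ≤ n (v - y₁) + n (w - y₂) := by
    intro y₁ h₁ y₂ h₂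
    have := distL_le h (v + w) (L.add_mem h₁ h₂)
    have e : v + w - (y₁ + y₂) = (v - y₁) + (w - y₂) := by abel
    rw [e] at this
    exact this.trans (h.2.2.2 _ _)
  have step1 : ∀ y₁ ∈ L, distL n L (v + w) - n (v - y₁) ≤ distL n L w := by
    intro y₁ h₁
    refine le_ciInf fun y₂ => ?_
    have := key y₁ h₁ y₂.1 y₂.2
    linarith
  have step2 : distL n L (v + w) - distL n L w ≤ distL n L v := by
    refine le_ciInf fun y₁ => ?_
    have := step1 y₁.1 y₁.2
    linarith
  linarith

theorem distL_smul (h : IsNorm n) (L : Submodule ℝ (Fin N → ℝ)) {c : ℝ} (hc : 0 < c)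
    (v : Fin N → ℝ) : distL n L (c • v) = c * distL n L v := by
  have le1 : ∀ (c : ℝ), 0 < c → ∀ v, distL n L (c • v) ≤ c * distL n L v := by
    intro c hc v
    have step : ∀ y : L, c⁻¹ * distL n L (c • v) ≤ n (v - y.1) := by
      intro y
      have h1 : distL n L (c • v) ≤ n (c • v - c • y.1) := distL_le h _ (L.smul_mem c y.2)
      have h2 : n (c • v - c • y.1) = c * n (v - y.1) := by
        rw [← smul_sub, h.2.2.1, abs_of_pos hc]
      rw [h2] at h1
      rw [inv_mul_le_iff₀ hc] -- c⁻¹ * d ≤ n ↔ d ≤ c * n ?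
      linarith
    have := le_ciInf step
    calc distL n L (c • v) = c * (c⁻¹ * distL n L (c • v)) := by field_simp
      _ ≤ c * distL n L v := mul_le_mul_of_nonneg_left this hc.le
  refine le_antisymm (le1 c hc v) ?_
  have h2 := le1 c⁻¹ (inv_pos.mpr hc) (c • v)
  rw [inv_smul_smul₀ hc.ne' v] at h2
  calc c * distL n L v ≤ c * (c⁻¹ * distL n L (c • v)) := mul_le_mul_of_nonneg_left h2 hc.le
    _ = distL n L (c • v) := by field_simp

end Stmt12Aux

namespace Stmt12Aux

variable {N : ℕ}

theorem S_nonempty {nY : (Fin N → ℝ) → ℝ} (hY : IsNorm nY) (L : Submodule ℝ (Fin N → ℝ)) :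
    Nonempty {z : Fin N → ℝ // dualNorm nY z ≤ 1 ∧ z ∈ perp L} :=
  ⟨⟨0, by rw [dualNorm_zero hY]; norm_num, (perp L).zero_mem⟩⟩

theorem pair_sub (x y z : Fin N → ℝ) :
    ∑ i, (x - y) i * z i = ∑ i, x i * z i - ∑ i, y i * z i := by
  rw [← Finset.sum_sub_distrib]
  exact Finset.sum_congr rfl fun i _ => by simp [sub_mul]

theorem pair_le_distL {nY : (Fin N → ℝ) → ℝ} (hY : IsNorm nY)
    {L : Submodule ℝ (Fin N → ℝ)} {z : Fin N → ℝ}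
    (hz1 : dualNorm nY z ≤ 1) (hz2 : z ∈ perp L) (x : Fin N → ℝ) :
    ∑ i, x i * z i ≤ distL nY L x := by
  refine le_ciInf fun y => ?_
  have h1 : ∑ i, x i * z i = ∑ i, (x - y.1) i * z i := by
    rw [pair_sub, mem_perp.mp hz2 y.1 y.2, sub_zero]
  rw [h1]
  calc ∑ i, (x - y.1) i * z i ≤ nY (x - y.1) * dualNorm nY z := pair_le_mul hY _ _
    _ ≤ nY (x - y.1) * 1 := mul_le_mul_of_nonneg_left hz1 (hY.1 _)
    _ = nY (x - y.1) := mul_one _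

theorem sup_bddAbove {nY : (Fin N → ℝ) → ℝ} (hY : IsNorm nY)
    (L : Submodule ℝ (Fin N → ℝ)) (x : Fin N → ℝ) :
    BddAbove (Set.range fun z : {z : Fin N → ℝ // dualNorm nY z ≤ 1 ∧ z ∈ perp L} =>
      ∑ i, x i * z.1 i) :=
  ⟨distL nY L x, Set.forall_mem_range.mpr fun z => pair_le_distL hY z.2.1 z.2.2 x⟩

/-- The key duality: distance to `L` equals sup of pairings over the dual-ball ∩ perp. -/
theorem distL_eq_sup {nY : (Fin N → ℝ) → ℝ} (hY : IsNorm nY)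
    (L : Submodule ℝ (Fin N → ℝ)) (x : Fin N → ℝ) :
    distL nY L x =
      ⨆ z : {z : Fin N → ℝ // dualNorm nY z ≤ 1 ∧ z ∈ perp L}, ∑ i, x i * z.1 i := by
  haveI := S_nonempty hY L
  refine le_antisymm ?_ (ciSup_le fun z => pair_le_distL hY z.2.1 z.2.2 x)
  rcases eq_or_ne x 0 with rfl | hx
  · have h1 : distL nY L 0 = 0 := distL_mem hY L.zero_mem
    rw [h1]
    have := le_ciSup (sup_bddAbove hY L 0) (Classical.arbitrary _)
    exact le_trans (by simp) this
  · -- Hahn-Banach extension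
    set d := distL nY L x with hd
    set e := LinearEquiv.toSpanNonzeroSingleton ℝ (Fin N → ℝ) x hx with he
    set flin : (Submodule.span ℝ {x}) →ₗ[ℝ] ℝ := d • (e.symm : _ →ₗ[ℝ] ℝ) with hflin
    have hsymm : ∀ (t : ℝ) (v : Submodule.span ℝ {x}), v.1 = t • x → e.symm v = t := by
      intro t v hv
      rw [LinearEquiv.symm_apply_eq, he, LinearEquiv.toSpanNonzeroSingleton_apply]
      exact Subtype.ext hv
    have hf : ∀ v : (LinearPMap.mk (Submodule.span ℝ {x}) flin : (Fin N → ℝ) →ₗ.[ℝ] ℝ).domain,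
        (LinearPMap.mk (Submodule.span ℝ {x}) flin) v ≤ distL nY L v.1 := by
      rintro ⟨v, hv⟩
      obtain ⟨t, ht⟩ := Submodule.mem_span_singleton.mp hv
      have hval : flin ⟨v, hv⟩ = d * t := by
        rw [hflin]
        simp only [LinearMap.smul_apply, LinearEquiv.coe_coe, smul_eq_mul]
        rw [hsymm t ⟨v, hv⟩ ht.symm]
      have : (LinearPMap.mk (Submodule.span ℝ {x}) flin) ⟨v, hv⟩ = d * t := hval
      rw [this]
      rcases le_or_gt t 0 with htle | htpos
      · have h0 : d * t ≤ 0 := mul_nonpos_of_nonneg_of_nonpos (distL_nonneg hY L x) htle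
        exact h0.trans (distL_nonneg hY L v)
      · have : distL nY L v = t * d := by
          rw [← ht, distL_smul hY L htpos x]
        rw [this]
        nlinarith
    obtain ⟨g, hg_eq, hg_le⟩ := exists_extension_of_le_sublinear
      (LinearPMap.mk (Submodule.span ℝ {x}) flin) (distL nY L)
      (fun c hc v => distL_smul hY L hc v) (distL_add hY L) hf
    have hgx : g x = d := by
      have h1 := hg_eq ⟨x, Submodule.mem_span_singleton_self x⟩
      have h2 : flin ⟨x, Submodule.mem_span_singleton_self x⟩ = d := by
        rw [hflin]
        simp only [LinearMap.smul_apply, LinearEquiv.coe_coe, smul_eq_mul]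
        rw [hsymm 1 ⟨x, Submodule.mem_span_singleton_self x⟩ (by simp), mul_one]
      exact h1.trans h2
    have hgL : ∀ y ∈ L, g y = 0 := by
      intro y hy
      have h1 : g y ≤ 0 := by simpa [distL_mem hY hy] using hg_le y
      have h2 : g (-y) ≤ 0 := by simpa [distL_mem hY (L.neg_mem hy)] using hg_le (-y)
      rw [map_neg] at h2
      linarith
    set z : Fin N → ℝ := fun i => g (fun j => if i = j then 1 else 0) with hz
    have hpair : ∀ w, ∑ i, w i * z i = g w := by
      intro w
      conv_rhs => rw [pi_eq_sum_univ w, map_sum]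
      exact Finset.sum_congr rfl fun i _ => by rw [map_smul, smul_eq_mul, hz]
    have hz1 : dualNorm nY z ≤ 1 := by
      refine dualNorm_le_one hY fun w => ?_
      rw [hpair]
      exact (hg_le w).trans (distL_le_norm hY L w)
    have hz2 : z ∈ perp L := mem_perp.mpr fun y hy => by rw [hpair]; exact hgL y hy
    have hfin : ∑ i, x i * z i = d := by rw [hpair, hgx]
    have := le_ciSup (sup_bddAbove hY L x) ⟨z, hz1, hz2⟩
    rw [hfin] at this  -- might fail; this : ∑ ... ≤ ⨆
    exact this

end Stmt12Aux

namespace Stmt12Aux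

theorem ciSup_swap_le {α β : Type*} [Nonempty α] [Nonempty β] (g : α → β → ℝ) (C : ℝ)
    (hg : ∀ a b, g a b ≤ C) : (⨆ a, ⨆ b, g a b) ≤ ⨆ b, ⨆ a, g a b := by
  refine ciSup_le fun a => ciSup_le fun b => ?_
  have h1 : g a b ≤ ⨆ a', g a' b :=
    le_ciSup ⟨C, Set.forall_mem_range.mpr fun a' => hg a' b⟩ a
  have h2 : (⨆ a', g a' b) ≤ ⨆ b', ⨆ a', g a' b' :=
    le_ciSup ⟨C, Set.forall_mem_range.mpr fun b' => ciSup_le fun a' => hg a' b'⟩ b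
  exact h1.trans h2

theorem ciSup_swap {ι κ : Type*} [Nonempty ι] [Nonempty κ] (f : ι → κ → ℝ) (C : ℝ)
    (hC : ∀ i j, f i j ≤ C) : ⨆ i, ⨆ j, f i j = ⨆ j, ⨆ i, f i j :=
  le_antisymm (ciSup_swap_le f C hC) (ciSup_swap_le (fun j i => f i j) C fun b a => hC a b)

variable {N : ℕ} {nX nY : (Fin N → ℝ) → ℝ}

theorem keyL (hX : IsNorm nX) (hY : IsNorm nY) (L : Submodule ℝ (Fin N → ℝ)) :
    (⨆ x : ↥{x : Fin N → ℝ | nX x ≤ 1}, ⨅ y : L, nY (x.1 - y.1))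
      = ⨆ z : {z : Fin N → ℝ // z ∈ {z : Fin N → ℝ | dualNorm nY z ≤ 1} ∧ z ∈ perp L},
          dualNorm nX z.1 := by
  haveI i1 : Nonempty {x : Fin N → ℝ // nX x ≤ 1} := ball_nonempty hX
  haveI i2 : Nonempty {z : Fin N → ℝ // dualNorm nY z ≤ 1 ∧ z ∈ perp L} := S_nonempty hY L
  obtain ⟨CY, hCY0, hCY⟩ := exists_upper hY
  obtain ⟨cX, hcX, hlX⟩ := exists_lower hX
  have hbound : ∀ (x : {x : Fin N → ℝ // nX x ≤ 1})
      (z : {z : Fin N → ℝ // dualNorm nY z ≤ 1 ∧ z ∈ perp L}),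
      ∑ i, x.1 i * z.1 i ≤ CY * cX⁻¹ := by
    intro x z
    have h1 : ∑ i, x.1 i * z.1 i ≤ nY x.1 * dualNorm nY z.1 := pair_le_mul hY _ _
    have h2 : nY x.1 * dualNorm nY z.1 ≤ nY x.1 := by
      calc nY x.1 * dualNorm nY z.1 ≤ nY x.1 * 1 :=
            mul_le_mul_of_nonneg_left z.2.1 (hY.1 _)
        _ = nY x.1 := mul_one _
    have h3 : ‖x.1‖ ≤ cX⁻¹ := by
      have := hlX x.1
      have h4 := x.2
      rw [← le_div_iff₀' hcX] at this
      calc ‖x.1‖ ≤ nX x.1 / cX := this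
        _ ≤ 1 / cX := by gcongr
        _ = cX⁻¹ := one_div cX
    have h5 : nY x.1 ≤ CY * cX⁻¹ := (hCY x.1).trans (by gcongr)
    linarith
  calc (⨆ x : ↥{x : Fin N → ℝ | nX x ≤ 1}, ⨅ y : L, nY (x.1 - y.1))
      = ⨆ x : {x : Fin N → ℝ // nX x ≤ 1},
          ⨆ z : {z : Fin N → ℝ // dualNorm nY z ≤ 1 ∧ z ∈ perp L}, ∑ i, x.1 i * z.1 i :=
        iSup_congr fun x => distL_eq_sup hY L x.1
    _ = ⨆ z : {z : Fin N → ℝ // dualNorm nY z ≤ 1 ∧ z ∈ perp L},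
          ⨆ x : {x : Fin N → ℝ // nX x ≤ 1}, ∑ i, x.1 i * z.1 i :=
        ciSup_swap _ (CY * cX⁻¹) hbound
    _ = ⨆ z : {z : Fin N → ℝ // z ∈ {z : Fin N → ℝ | dualNorm nY z ≤ 1} ∧ z ∈ perp L},
          dualNorm nX z.1 := rfl

end Stmt12Aux

/-- Duality between Kolmogorov and Gelfand widths:
`d_k(B_X, Y) = d^k(B_{Y*}, X*)`. -/
theorem stmt12 (N k : ℕ) (hk : k ≤ N)
    (nX nY : (Fin N → ℝ) → ℝ) (hX : IsNorm nX) (hY : IsNorm nY) :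
    kolWidth N k {x | nX x ≤ 1} nY
      = gelWidth N k {x | dualNorm nY x ≤ 1} (dualNorm nX) := by
  classical
  have hrange : Set.range (fun L : {L : Submodule ℝ (Fin N → ℝ) // Module.finrank ℝ L ≤ k} =>
        ⨆ x : ↥{x : Fin N → ℝ | nX x ≤ 1}, ⨅ y : L.1, nY (x.1 - y.1))
      = Set.range (fun L : {L : Submodule ℝ (Fin N → ℝ) // N ≤ k + Module.finrank ℝ L} =>
        ⨆ x : {x : Fin N → ℝ // x ∈ {x : Fin N → ℝ | dualNorm nY x ≤ 1} ∧ x ∈ L.1},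
          dualNorm nX x.1) := by
    ext r
    simp only [Set.mem_range]
    constructor
    · rintro ⟨⟨L, hL⟩, rfl⟩
      refine ⟨⟨Stmt12Aux.perp L, ?_⟩, ?_⟩
      · rw [Stmt12Aux.finrank_perp]
        have := Stmt12Aux.finrank_le L
        omega
      · exact (Stmt12Aux.keyL hX hY L).symm
    · rintro ⟨⟨L', hL'⟩, rfl⟩
      refine ⟨⟨Stmt12Aux.perp L', ?_⟩, ?_⟩
      · rw [Stmt12Aux.finrank_perp]
        omega
      · have := Stmt12Aux.keyL hX hY (Stmt12Aux.perp L')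
        rw [Stmt12Aux.perp_perp] at this
        exact this
  rw [kolWidth, gelWidth, ← sInf_range, ← sInf_range, hrange]
end
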